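/- Let B be an n×n matrix over a commutative ring, let S ⊆ {1, …, n}, let D be the diagonal matrix whose (i,i)-entry is 1 if i ∈ S and 0 otherwise, and let x be a scalar. Then det(xD + B) = Σ_{T ⊆ S} x^{|T|} · det(B_{T^c}), where B_{T^c} is the principal submatrix of B obtained by deleting the rows and columns with indices in T (with the convention that the determinant of the empty matrix is 1). -/

import Mathlib

open Matrix

lemma det_piecewise_single_aux {n : ℕ} {R : Type*} [CommRing R]
    (B : Matrix (Fin n) (Fin n) R) (s : Finset (Fin n)) :
    Matrix.det (Matrix.of (s.piecewise (fun i => Pi.single i (1 : R)) (fun i => B i))) =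
      Matrix.det (B.submatrix (Subtype.val : {i // i ∈ sᶜ} → Fin n) Subtype.val) := by
  classical
  set M : Matrix (Fin n) (Fin n) R :=
    Matrix.of (s.piecewise (fun i => Pi.single i (1 : R)) (fun i => B i)) with hM
  let e : {i // i ∈ s} ⊕ {i // i ∈ sᶜ} ≃ Fin n :=
    (Equiv.sumCongr (Equiv.refl _)
      (Equiv.subtypeEquivRight fun i => (Finset.mem_compl (a := i)))).trans
      (Equiv.sumCompl (· ∈ s))
  rw [← Matrix.det_submatrix_equiv_self e M]
  have hblock : M.submatrix e e =
      Matrix.fromBlocks 1 0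
        (Matrix.of fun i j => B i.val j.val)
        (B.submatrix (Subtype.val : {i // i ∈ sᶜ} → Fin n) Subtype.val) := by
    ext i j
    cases i with
    | inl i =>
      have hi : (i : Fin n) ∈ s := i.2
      cases j with
      | inl j =>
        simp only [Matrix.submatrix_apply, hM, Matrix.of_apply, e, Equiv.trans_apply,
          Equiv.sumCongr_apply, Equiv.refl_apply, Sum.map_inl, Equiv.sumCompl_apply_inl,
          Matrix.fromBlocks_apply₁₁, s.piecewise_eq_of_mem _ _ hi]
        rw [Matrix.one_apply, Pi.single_apply]
        exact if_congr ⟨fun h => Subtype.ext h.symm, fun h => congrArg Subtype.val h.symm⟩ rfl rfl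
      | inr j =>
        have hj : (j : Fin n) ∉ s := Finset.mem_compl.mp j.2
        simp only [Matrix.submatrix_apply, hM, Matrix.of_apply, e, Equiv.trans_apply,
          Equiv.sumCongr_apply, Equiv.refl_apply, Sum.map_inl, Sum.map_inr,
          Equiv.sumCompl_apply_inl, Equiv.sumCompl_apply_inr, Equiv.subtypeEquivRight_apply_coe,
          Matrix.fromBlocks_apply₁₂, s.piecewise_eq_of_mem _ _ hi]
        rw [Pi.single_apply, if_neg]
        · rfl
        · intro h; exact hj (h ▸ hi)
    | inr i =>
      have hi : (i : Fin n) ∉ s := Finset.mem_compl.mp i.2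
      cases j with
      | inl j =>
        simp [hM, e, s.piecewise_eq_of_notMem _ _ hi]
      | inr j =>
        simp [hM, e, s.piecewise_eq_of_notMem _ _ hi]
  rw [hblock, Matrix.det_fromBlocks_zero₁₂, Matrix.det_one, one_mul]

theorem stmt5 (n : ℕ) (R : Type*) [CommRing R]
    (B : Matrix (Fin n) (Fin n) R) (S : Finset (Fin n)) (x : R) :
    Matrix.det (x • Matrix.diagonal (fun i => if i ∈ S then (1 : R) else 0) + B) =
      ∑ T ∈ S.powerset, x ^ T.card *
        Matrix.det (B.submatrix (Subtype.val : {i // i ∈ Tᶜ} → Fin n) Subtype.val) := by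
  classical
  set D : Matrix (Fin n) (Fin n) R :=
    Matrix.diagonal (fun i => if i ∈ S then (1 : R) else 0) with hD
  set f : MultilinearMap R (fun _ : Fin n => Fin n → R) R :=
    (Matrix.detRowAlternating : AlternatingMap R (Fin n → R) R (Fin n)).toMultilinearMap with hf
  set m : Fin n → Fin n → R := fun i => (x • D) i with hm
  set m' : Fin n → Fin n → R := fun i => B i with hm'
  have hsplit : (fun i => (x • D + B) i) = S.piecewise (m + m') m' := by
    funext i
    by_cases hi : i ∈ S
    · rw [S.piecewise_eq_of_mem _ _ hi]; rfl
    · rw [S.piecewise_eq_of_notMem _ _ hi]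
      funext j
      have h0 : (x • D) i j = 0 := by
        simp [hD, Matrix.diagonal_apply, hi]
      show (x • D) i j + B i j = B i j
      rw [h0, zero_add]
  have hdet : Matrix.det (x • D + B) = f (S.piecewise (m + m') m') := by
    rw [← hsplit]; rfl
  rw [hdet, f.map_piecewise_add m m' S]
  refine Finset.sum_congr rfl fun s hs => ?_
  have hsS : s ⊆ S := Finset.mem_powerset.mp hs
  set m₀ : Fin n → Fin n → R := s.piecewise (fun i => Pi.single i (1 : R)) m' with hm₀
  have hrow : s.piecewise m m' = s.piecewise (fun i => x • m₀ i) m₀ := by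
    funext i
    by_cases hi : i ∈ s
    · rw [s.piecewise_eq_of_mem _ _ hi, s.piecewise_eq_of_mem _ _ hi,
        hm₀, s.piecewise_eq_of_mem _ _ hi]
      funext j
      have hiS : i ∈ S := hsS hi
      simp [hm, hD, Matrix.diagonal_apply, Pi.single_apply, hiS, eq_comm]
    · rw [s.piecewise_eq_of_notMem _ _ hi, s.piecewise_eq_of_notMem _ _ hi,
        hm₀, s.piecewise_eq_of_notMem _ _ hi]
  rw [hrow, f.map_piecewise_smul (fun _ => x) m₀ s, Finset.prod_const, smul_eq_mul]
  congr 1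
  have : f m₀ = Matrix.det (Matrix.of (s.piecewise (fun i => Pi.single i (1 : R))
      (fun i => B i))) := rfl
  rw [this, det_piecewise_single_aux]
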